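/- arXiv:1502.05158 — 4 statements merged into one kernel-verified Lean document; each statement's English description precedes it below -/
import Mathlib

section
/- If F is real-analytic near 0 with F(0)=0, F'(0)=0, F''(0)=0 and F is not identically F(0) near 0, then the improper integral ∫₀^ε √(u/(F(0)-F(u))) du diverges for every sufficiently small ε>0 for which the integrand is defined, i.e., the integral is +∞. -/
open MeasureTheory Set

/-- If F is real-analytic near 0 with F(0)=0, F'(0)=0, F''(0)=0 and F not identically
F(0) near 0 (with F(0)-F(u)>0 for small u>0 so the integrand is defined), then the
improper integral ∫₀^ε √(u/(F(0)-F(u))) du diverges for every sufficiently small ε>0. -/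
theorem stmt2 (F : ℝ → ℝ) (hF : AnalyticAt ℝ F 0) (h0 : F 0 = 0)
    (h1 : deriv F 0 = 0) (h2 : iteratedDeriv 2 F 0 = 0)
    (hnc : ¬ (∀ᶠ u in nhds 0, F u = F 0))
    (hpos : ∀ᶠ u in nhdsWithin 0 (Ioi 0), F u < F 0) :
    ∃ ε₀ > 0, ∀ ε : ℝ, 0 < ε → ε ≤ ε₀ →
      ¬ IntegrableOn (fun u => Real.sqrt (u / (F 0 - F u))) (Ioo 0 ε) := by
  -- order is finite
  have htop : analyticOrderAt F 0 ≠ ⊤ := by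
    intro h
    rw [analyticOrderAt_eq_top] at h
    exact hnc (by simpa [h0] using h)
  obtain ⟨n, hn⟩ : ∃ n : ℕ, analyticOrderAt F 0 = n := by
    lift analyticOrderAt F 0 to ℕ using htop with n hn
    exact ⟨n, rfl⟩
  obtain ⟨g, hg_an, hg0, hFg⟩ := (hF.analyticOrderAt_eq_natCast (n := n)).mp hn
  simp only [sub_zero, smul_eq_mul] at hFg
  obtain ⟨s, hs_mem, hs_an⟩ := hg_an.exists_mem_nhds_analyticOnNhd
  have hgd : DifferentiableAt ℝ g 0 := hg_an.differentiableAt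
  -- rule out n = 0, 1, 2
  have hn3 : 3 ≤ n := by
    by_contra hlt
    push_neg at hlt
    interval_cases n
    · exact hg0 (by simpa [h0] using hFg.self_of_nhds.symm)
    · have hFg' : F =ᶠ[nhds 0] (fun z => z ^ 1 * g z) := hFg
      have hd : HasDerivAt (fun z : ℝ => z ^ 1 * g z) (g 0) 0 := by
        simpa using (hasDerivAt_pow 1 (0 : ℝ)).fun_mul hgd.hasDerivAt
      have := hFg'.deriv_eq.trans hd.deriv
      exact hg0 (by rw [h1] at this; exact this.symm)
    · -- n = 2 : second derivative is 2 * g 0 ≠ 0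
      have hFg' : F =ᶠ[nhds 0] (fun z => z ^ 2 * g z) := hFg
      have hev : deriv F =ᶠ[nhds 0] fun z => 2 * z * g z + z ^ 2 * deriv g z := by
        have hev1 : deriv F =ᶠ[nhds 0] deriv (fun z => z ^ 2 * g z) := hFg'.deriv
        have hev2 : ∀ᶠ z in nhds 0, deriv (fun z => z ^ 2 * g z) z
            = 2 * z * g z + z ^ 2 * deriv g z := by
          filter_upwards [hg_an.eventually_analyticAt] with z hz
          have hd : HasDerivAt (fun z : ℝ => z ^ 2 * g z)
              (2 * z ^ 1 * g z + z ^ 2 * deriv g z) z := by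
            simpa using (hasDerivAt_pow 2 z).fun_mul hz.differentiableAt.hasDerivAt
          simpa using hd.deriv
        exact hev1.trans hev2
      have hderiv_g : DifferentiableAt ℝ (deriv g) 0 :=
        ((hs_an.deriv) 0 (mem_of_mem_nhds hs_mem)).differentiableAt
      have hd2 : HasDerivAt (fun z : ℝ => 2 * z * g z + z ^ 2 * deriv g z) (2 * g 0) 0 := by
        have ha : HasDerivAt (fun z : ℝ => 2 * z * g z) (2 * g 0) 0 := by
          simpa using (((hasDerivAt_id (0:ℝ)).const_mul 2).fun_mul hgd.hasDerivAt)
        have hb : HasDerivAt (fun z : ℝ => z ^ 2 * deriv g z) 0 0 := by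
          simpa using (hasDerivAt_pow 2 (0:ℝ)).fun_mul hderiv_g.hasDerivAt
        simpa using ha.fun_add hb
      have : iteratedDeriv 2 F 0 = 2 * g 0 := by
        rw [iteratedDeriv_succ, iteratedDeriv_one, hev.deriv_eq, hd2.deriv]
      rw [h2] at this
      exact hg0 (by linarith)
  -- g 0 < 0
  have hg0neg : g 0 < 0 := by
    have hle : g 0 ≤ 0 := by
      have htend : Filter.Tendsto g (nhdsWithin 0 (Ioi 0)) (nhds (g 0)) :=
        (hg_an.continuousAt.continuousWithinAt).tendsto
      refine le_of_tendsto htend ?_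
      filter_upwards [hpos, (hFg.filter_mono nhdsWithin_le_nhds),
        self_mem_nhdsWithin] with u hu hFu (hu0 : u ∈ Ioi 0)
      rw [h0] at hu
      rw [hFu] at hu
      nlinarith [pow_pos (mem_Ioi.mp hu0) n]
    exact lt_of_le_of_ne hle hg0
  set M : ℝ := 1 - g 0 with hM
  have hMpos : 0 < M := by simp only [hM]; linarith
  have hgIoo : ∀ᶠ u in nhds 0, g u ∈ Ioo (g 0 - 1) 0 := by
    have : Ioo (g 0 - 1) 0 ∈ nhds (g 0) := Ioo_mem_nhds (by linarith) hg0neg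
    exact hg_an.continuousAt.preimage_mem_nhds this
  obtain ⟨δ, hδpos, hδ⟩ := Metric.eventually_nhds_iff.mp (hFg.and hgIoo)
  refine ⟨min δ 1, lt_min hδpos one_pos, fun ε hε hεle hint => ?_⟩
  -- key pointwise bound
  have hbound : ∀ u ∈ Ioo (0:ℝ) ε, u⁻¹ ≤ Real.sqrt M * Real.sqrt (u / (F 0 - F u)) := by
    rintro u ⟨hu0, huε⟩
    have huδ : u < δ := lt_of_lt_of_le huε (hεle.trans (min_le_left _ _))
    have hu1 : u ≤ 1 := le_of_lt (lt_of_lt_of_le huε (hεle.trans (min_le_right _ _)))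
    obtain ⟨hFu, hgu1, hgu2⟩ :=
      hδ (show dist u 0 < δ by rw [Real.dist_eq, sub_zero, abs_of_pos hu0]; exact huδ)
    have ha0 : 0 < -g u := by linarith
    have haM : -g u ≤ M := by simp only [hM]; linarith
    have hFval : F 0 - F u = u ^ n * (-g u) := by rw [h0, hFu]; ring
    rw [← Real.sqrt_mul hMpos.le, Real.le_sqrt (by positivity), hFval,
      div_eq_mul_inv, ← mul_assoc, inv_pow, ← div_eq_mul_inv, le_div_iff₀ (by positivity)]
    -- ⊢ (u ^ 2)⁻¹ * (u ^ n * -g u) ≤ M * u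
    have h3 : u ^ n ≤ u ^ 3 := pow_le_pow_of_le_one hu0.le hu1 hn3
    have h4 : u ^ n * -g u ≤ u ^ 3 * M :=
      mul_le_mul h3 haM ha0.le (by positivity)
    have h5 : (u ^ 2)⁻¹ * (u ^ n * -g u) ≤ (u ^ 2)⁻¹ * (u ^ 3 * M) :=
      mul_le_mul_of_nonneg_left h4 (by positivity)
    have h6 : (u ^ 2)⁻¹ * (u ^ 3 * M) = M * u := by
      field_simp
    linarith
    · rw [hFval]; positivity
  -- conclude non-integrability of u⁻¹, contradiction
  have hinv : IntegrableOn (fun u : ℝ => u⁻¹) (Ioo 0 ε) := by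
    refine Integrable.mono' (hint.const_mul (Real.sqrt M)) measurable_inv.aestronglyMeasurable ?_
    filter_upwards [ae_restrict_mem measurableSet_Ioo] with u hu
    rw [Real.norm_eq_abs, abs_of_pos (inv_pos.mpr hu.1)]
    exact hbound u hu
  have hrpow : IntegrableOn (fun u : ℝ => u ^ (-1 : ℝ)) (Ioo 0 ε) := by
    refine hinv.congr_fun (fun u hu => ?_) measurableSet_Ioo
    rw [Real.rpow_neg_one]
  have := (intervalIntegral.integrableOn_Ioo_rpow_iff hε).mp hrpow
  linarith
end

section
/- Let F be real-analytic near m>0 with F'(m)=0 and F(u)<F(m) for u in (m-ε₀,m). Then the improper integral ∫_{m-ε}^{m} √(u/(F(m)-F(u))) du diverges (equals +∞) for all sufficiently small ε>0. -/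
open MeasureTheory Set

/-- Let F be real-analytic and non-constant near m>0 with F'(m)=0 and F(u)<F(m) for u in
(m-ε₀,m). Then the improper integral ∫_{m-ε}^{m} √(u/(F(m)-F(u))) du diverges for all
sufficiently small ε>0. -/
theorem stmt4 (F : ℝ → ℝ) (m ε₀ : ℝ) (hm : 0 < m) (hF : AnalyticAt ℝ F m)
    (hd : deriv F m = 0) (hε₀ : 0 < ε₀)
    (hnc : ¬ (∀ᶠ u in nhds m, F u = F m))
    (hlt : ∀ u ∈ Ioo (m - ε₀) m, F u < F m) :
    ∃ ε₁ > 0, ∀ ε : ℝ, 0 < ε → ε ≤ ε₁ →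
      ¬ IntegrableOn (fun u => Real.sqrt (u / (F m - F u))) (Ioo (m - ε) m) := by
  classical
  -- Step 1: quadratic bound `F m - F u ≤ C' * (m - u)^2` near `m`
  obtain ⟨p, hp⟩ := hF
  have hps : ∀ y : ℝ, p.partialSum 2 y = F m := by
    intro y
    have c0 : p.coeff 0 = F m := hp.coeff_zero _
    have c1 : p.coeff 1 = 0 := by
      have := hp.deriv
      rw [hd] at this
      exact this.symm
    simp [FormalMultilinearSeries.partialSum, Finset.sum_range_succ,
      FormalMultilinearSeries.apply_eq_pow_smul_coeff, c0, c1]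
  have h2 := hp.isBigO_sub_partialSum_pow 2
  rw [Asymptotics.isBigO_iff] at h2
  obtain ⟨C, hC⟩ := h2
  rw [Metric.eventually_nhds_iff] at hC
  obtain ⟨δ, hδ, hbound⟩ := hC
  set C' : ℝ := max C 1 with hC'def
  have hC' : 0 < C' := lt_of_lt_of_le one_pos (le_max_right _ _)
  set ε₁ : ℝ := min (min ε₀ (m / 2)) (δ / 2) with hε₁def
  have hε₁pos : 0 < ε₁ := lt_min (lt_min hε₀ (by linarith)) (by linarith)
  have key : ∀ u ∈ Ioo (m - ε₁) m, F m - F u ≤ C' * (m - u) ^ 2 := by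
    intro u hu
    have hdist : dist (u - m) 0 < δ := by
      rw [Real.dist_eq, sub_zero, abs_of_nonpos (by linarith [hu.2])]
      have : m - u < ε₁ := by linarith [hu.1]
      have : ε₁ ≤ δ / 2 := min_le_right _ _
      linarith
    have hnorm : |u - m| = m - u := by
      rw [abs_of_nonpos (by linarith [hu.2])]; ring
    have hb := hbound hdist
    simp only [add_sub_cancel, hps, Real.norm_eq_abs, hnorm] at hb
    rw [abs_of_nonneg (by positivity : (0:ℝ) ≤ (m - u) ^ 2)] at hb
    have h1 : F m - F u ≤ |F u - F m| := by
      rw [abs_sub_comm]; exact le_abs_self _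
    have h2 : C * (m - u) ^ 2 ≤ C' * (m - u) ^ 2 := by
      apply mul_le_mul_of_nonneg_right (le_max_left _ _) (by positivity)
    linarith
  refine ⟨ε₁, hε₁pos, fun ε hε hεle hI => ?_⟩
  have hsub : Ioo (m - ε) m ⊆ Ioo (m - ε₁) m := by
    apply Ioo_subset_Ioo (by linarith) le_rfl
  set c : ℝ := Real.sqrt (m / 2 / C') with hcdef
  have hc : 0 < c := Real.sqrt_pos.2 (by positivity)
  -- comparison: c / (m - u) ≤ integrand on the interval
  have key2 : ∀ u ∈ Ioo (m - ε) m, c * (m - u)⁻¹ ≤ Real.sqrt (u / (F m - F u)) := by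
    intro u hu
    have hu' := hsub hu
    have hum : m - u > 0 := by linarith [hu.2]
    have hu2 : m / 2 ≤ u := by
      have : ε₁ ≤ m / 2 := le_trans (min_le_left _ _) (min_le_right _ _)
      have := hu'.1; linarith
    have hu0 : 0 < u := by linarith
    have hFu : 0 < F m - F u := by
      have : ε₁ ≤ ε₀ := le_trans (min_le_left _ _) (min_le_left _ _)
      have := hlt u ⟨by linarith [hu'.1], hu'.2⟩
      linarith
    have hQ := key u hu'
    have hdiv : m / 2 / C' * ((m - u)⁻¹) ^ 2 ≤ u / (F m - F u) := by
      have h1 : m / 2 / C' * ((m - u)⁻¹) ^ 2 = (m / 2) / (C' * (m - u) ^ 2) := by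
        rw [inv_pow, div_eq_mul_inv (m / 2) C', mul_assoc, ← mul_inv, ← div_eq_mul_inv]
      rw [h1]
      exact div_le_div₀ (le_of_lt hu0) hu2 hFu hQ
    calc c * (m - u)⁻¹ = Real.sqrt (m / 2 / C' * ((m - u)⁻¹) ^ 2) := by
          rw [Real.sqrt_mul (by positivity), Real.sqrt_sq (by positivity)]
      _ ≤ Real.sqrt (u / (F m - F u)) := Real.sqrt_le_sqrt hdiv
  -- derive integrability of `c / (m - u)` on the interval
  have hg : IntegrableOn (fun u => c * (m - u)⁻¹) (Ioo (m - ε) m) := by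
    apply MeasureTheory.Integrable.mono hI
    · exact (measurable_const.mul ((measurable_const.sub measurable_id).inv)).aestronglyMeasurable
    · rw [ae_restrict_iff' measurableSet_Ioo]
      filter_upwards with u hu
      have hum : m - u > 0 := by linarith [hu.2]
      rw [Real.norm_eq_abs, Real.norm_eq_abs, abs_of_nonneg (by positivity),
        abs_of_nonneg (Real.sqrt_nonneg _)]
      exact key2 u hu
  -- transfer to `Ioo 0 ε` and contradict non-integrability of `x⁻¹`
  have hgI : IntervalIntegrable (fun u => c * (m - u)⁻¹) volume (m - ε) m := by
    rw [intervalIntegrable_iff_integrableOn_Ioo_of_le (by linarith)]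
    exact hg
  have h3 : IntervalIntegrable (fun x : ℝ => c * x⁻¹) volume 0 ε := by
    have := (hgI.comp_sub_left m).symm
    simp only [sub_sub_cancel, sub_self] at this
    exact this
  have h4 : IntegrableOn (fun x : ℝ => x⁻¹) (Ioo (0 : ℝ) ε) := by
    have h5 := h3.smul c⁻¹
    rw [intervalIntegrable_iff_integrableOn_Ioo_of_le (le_of_lt hε)] at h5
    refine h5.congr_fun (fun x _ => ?_) measurableSet_Ioo
    simp [smul_eq_mul, ← mul_assoc, inv_mul_cancel₀ (ne_of_gt hc)]
  have h6 : IntegrableOn (fun x : ℝ => x ^ (-1 : ℝ)) (Ioo (0 : ℝ) ε) := by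
    refine h4.congr_fun (fun x _ => ?_) measurableSet_Ioo
    have : x ^ ((-1 : ℤ) : ℝ) = x ^ (-1 : ℤ) := Real.rpow_intCast x (-1)
    simpa using this.symm
  have := (intervalIntegral.integrableOn_Ioo_rpow_iff hε).1 h6
  linarith
end

section
/- Let F(w) = A·w + B·w² - (a/6)w³ with a<0 and suppose F'(0) = A < 0. Then there is no m>0 such that F(m)=F(0), F(u)<F(0) for all u∈(0,m), and F'(m)=0. (Hence the generalized Camassa–Holm equation with a<0 admits no peaked solitary traveling wave.) -/
open Set

/-- For F(w)=Aw+Bw²-(a/6)w³ with a<0 and F'(0)=A<0, there is no m>0 with F(m)=F(0),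
F<F(0) on (0,m) and F'(m)=0; hence the generalized Camassa–Holm equation with a≤0 has no
peaked solitary traveling wave. -/
theorem stmt16 (a A B : ℝ) (ha : a < 0) (hA : A < 0)
    (F : ℝ → ℝ) (hF : F = fun w => A * w + B * w^2 - (a/6) * w^3) :
    ¬ ∃ m > 0, F m = F 0 ∧ (∀ u ∈ Ioo 0 m, F u < F 0) ∧ deriv F m = 0 := by
  rintro ⟨m, hm, h1, -, h3⟩
  have hd : HasDerivAt F (A * 1 + B * (2 * m) - (a/6) * (3 * m^2)) m := by
    subst hF
    have := ((hasDerivAt_id m).const_mul A |>.add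
      (((hasDerivAt_pow 2 m).const_mul B))).sub ((hasDerivAt_pow 3 m).const_mul (a/6))
    simpa [Pi.add_def, Pi.sub_def] using this
  rw [hd.deriv] at h3
  have h1' : A * m + B * m^2 - (a/6) * m^3 = 0 := by
    simpa [hF] using h1
  nlinarith [sq_nonneg m, sq_nonneg (m*m), mul_pos hm hm, mul_pos (mul_pos hm hm) hm]
end

section
/- Suppose F is continuous with F(0)=0, and there exist m>0 with F(m)=0 and F(u)<0 for all u∈(0,m), and F'(0)<0, F'(m)≠0 (F differentiable at 0 and m). Define T = √2·∫₀^m √(u/(-F(u))) du. Then T is finite and positive. -/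
open MeasureTheory Set Filter Topology

set_option maxHeartbeats 800000

/-- Lower bound `c·u·(m-u) ≤ -F u` on `(0,m)`. -/
lemma exists_lower_bound_aux (F : ℝ → ℝ) (m : ℝ) (hm : 0 < m)
    (hcont : ContinuousOn F (Icc 0 m)) (h0 : F 0 = 0) (hFm : F m = 0)
    (hneg : ∀ u ∈ Ioo 0 m, F u < 0)
    (hd0 : DifferentiableAt ℝ F 0) (hdm : DifferentiableAt ℝ F m)
    (h1 : deriv F 0 < 0) (h2 : deriv F m ≠ 0) :
    ∃ c > 0, ∀ u ∈ Ioo 0 m, c * (u * (m - u)) ≤ -F u := by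
  -- near 0
  have hs0 : Tendsto (slope F 0) (𝓝[>] 0) (𝓝 (deriv F 0)) :=
    (hasDerivAt_iff_tendsto_slope.mp hd0.hasDerivAt).mono_left
      (nhdsWithin_mono 0 (fun x hx => ne_of_gt hx))
  have hev0 : ∀ᶠ u in 𝓝[>] (0:ℝ), slope F 0 u < deriv F 0 / 2 :=
    hs0.eventually_lt_const (by linarith)
  rw [eventually_iff, mem_nhdsGT_iff_exists_Ioo_subset] at hev0
  obtain ⟨δ, hδ, hsub0⟩ := hev0
  have hδ0 : (0:ℝ) < δ := hδ
  -- near m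
  have hsm : Tendsto (slope F m) (𝓝[<] m) (𝓝 (deriv F m)) :=
    (hasDerivAt_iff_tendsto_slope.mp hdm.hasDerivAt).mono_left
      (nhdsWithin_mono m (fun x hx => ne_of_lt hx))
  have hslope_pos : ∀ u ∈ Ioo 0 m, 0 < slope F m u := by
    intro u hu
    have h3 := hneg u hu
    have h4 : u - m < 0 := by linarith [hu.2]
    have hsl : slope F m u = F u / (u - m) := by
      simp [slope, hFm, div_eq_inv_mul]
    rw [hsl]
    exact div_pos_of_neg_of_neg h3 h4
  have hdm_nonneg : 0 ≤ deriv F m := by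
    refine ge_of_tendsto hsm ?_
    filter_upwards [Ioo_mem_nhdsLT_of_mem (show m ∈ Ioc 0 m from ⟨hm, le_refl m⟩)]
      with u hu using (hslope_pos u hu).le
  have hdm_pos : 0 < deriv F m := lt_of_le_of_ne hdm_nonneg (Ne.symm h2)
  have hevm : ∀ᶠ u in 𝓝[<] m, deriv F m / 2 < slope F m u :=
    hsm.eventually_const_lt (by linarith)
  rw [eventually_iff, mem_nhdsLT_iff_exists_Ioo_subset] at hevm
  obtain ⟨l, hl, hsubm⟩ := hevm
  have hlm : l < m := hl
  -- middle compact part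
  have ha_pos : 0 < min δ m / 2 := by positivity
  have ha_lt : min δ m / 2 < m := by have := min_le_right δ m; linarith
  have hb_lt : (max l 0 + m) / 2 < m := by have := max_lt hlm hm; linarith
  have hb_pos : 0 < (max l 0 + m) / 2 := by have := le_max_right l 0; linarith
  have hab : min δ m / 2 ≤ (max l 0 + m) / 2 := by
    have h5 := min_le_right δ m; have h6 := le_max_right l 0; linarith
  obtain ⟨x0, hx0K, hx0max⟩ := isCompact_Icc.exists_isMaxOn (nonempty_Icc.mpr hab)
    (hcont.mono (Icc_subset_Icc ha_pos.le hb_lt.le))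
  have hx0Ioo : x0 ∈ Ioo 0 m := ⟨lt_of_lt_of_le ha_pos hx0K.1, lt_of_le_of_lt hx0K.2 hb_lt⟩
  have hε_pos : 0 < -F x0 := by have := hneg x0 hx0Ioo; linarith
  -- constant
  have hA : 0 < -deriv F 0 / (2 * m) := div_pos (by linarith) (by positivity)
  have hB : 0 < deriv F m / (2 * m) := div_pos hdm_pos (by positivity)
  have hC : 0 < -F x0 / (m * m) := div_pos hε_pos (by positivity)
  refine ⟨min (min (-deriv F 0 / (2 * m)) (deriv F m / (2 * m))) (-F x0 / (m * m)),
    lt_min (lt_min hA hB) hC, fun u hu => ?_⟩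
  obtain ⟨hu0, hum⟩ := hu
  have hc_pos : 0 < min (min (-deriv F 0 / (2 * m)) (deriv F m / (2 * m))) (-F x0 / (m * m)) :=
    lt_min (lt_min hA hB) hC
  rcases lt_or_ge u δ with hcase | hcase
  · -- near 0
    have hlt := hsub0 ⟨hu0, hcase⟩
    simp only [mem_setOf_eq, slope, h0, vsub_eq_sub, sub_zero, smul_eq_mul] at hlt
    have hFu : F u < deriv F 0 / 2 * u := by
      have := (div_lt_iff₀ hu0).mp (by rw [div_eq_inv_mul]; exact hlt)
      linarith [this]
    have hc1 : min (min (-deriv F 0 / (2 * m)) (deriv F m / (2 * m))) (-F x0 / (m * m))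
        ≤ -deriv F 0 / (2 * m) := le_trans (min_le_left _ _) (min_le_left _ _)
    have hum' : u * (m - u) ≤ u * m := by nlinarith
    calc min (min (-deriv F 0 / (2 * m)) (deriv F m / (2 * m))) (-F x0 / (m * m)) * (u * (m - u))
        ≤ (-deriv F 0 / (2 * m)) * (u * m) :=
          mul_le_mul hc1 hum' (by nlinarith) hA.le
      _ = -deriv F 0 / 2 * u := by field_simp
      _ ≤ -F u := by linarith
  · rcases lt_or_ge l u with hcase2 | hcase2
    · -- near m
      have hlt := hsubm ⟨hcase2, hum⟩
      simp only [mem_setOf_eq, slope, hFm, vsub_eq_sub, sub_zero, smul_eq_mul] at hlt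
      have hum' : u - m < 0 := by linarith
      -- hlt : deriv F m / 2 < (u - m)⁻¹ * F u
      have h8 := mul_lt_mul_of_neg_right hlt hum'
      have h9 : (u - m)⁻¹ * F u * (u - m) = F u := by
        rw [mul_comm, ← mul_assoc, mul_inv_cancel₀ (ne_of_lt hum'), one_mul]
      rw [h9] at h8
      -- h8 : F u < deriv F m / 2 * (u - m)
      have h10 : deriv F m / 2 * (u - m) = -(deriv F m / 2 * (m - u)) := by ring
      have hFu : deriv F m / 2 * (m - u) < -F u := by rw [h10] at h8; linarith
      have hc1 : min (min (-deriv F 0 / (2 * m)) (deriv F m / (2 * m))) (-F x0 / (m * m))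
          ≤ deriv F m / (2 * m) := le_trans (min_le_left _ _) (min_le_right _ _)
      have hum'' : u * (m - u) ≤ m * (m - u) := by nlinarith
      calc min (min (-deriv F 0 / (2 * m)) (deriv F m / (2 * m))) (-F x0 / (m * m)) * (u * (m - u))
          ≤ (deriv F m / (2 * m)) * (m * (m - u)) :=
            mul_le_mul hc1 hum'' (by nlinarith) hB.le
        _ = deriv F m / 2 * (m - u) := by field_simp
        _ ≤ -F u := hFu.le
    · -- middle
      have huK : u ∈ Icc (min δ m / 2) ((max l 0 + m) / 2) := by
        constructor
        · have := min_le_left δ m; linarith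
        · have := le_max_left l 0; linarith
      have hFmax : F u ≤ F x0 := hx0max huK
      have hc1 : min (min (-deriv F 0 / (2 * m)) (deriv F m / (2 * m))) (-F x0 / (m * m))
          ≤ -F x0 / (m * m) := min_le_right _ _
      have hub : u * (m - u) ≤ m * m := by nlinarith
      calc min (min (-deriv F 0 / (2 * m)) (deriv F m / (2 * m))) (-F x0 / (m * m)) * (u * (m - u))
          ≤ (-F x0 / (m * m)) * (m * m) := mul_le_mul hc1 hub (by nlinarith) hC.le
        _ = -F x0 := by field_simp
        _ ≤ -F u := by linarith

lemma int_rpow_aux (m : ℝ) (hm : 0 < m) :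
    IntegrableOn (fun u : ℝ => (m - u) ^ (-(1/2) : ℝ)) (Ioo 0 m) := by
  have h1 : IntervalIntegrable (fun x : ℝ => x ^ (-(1/2) : ℝ)) volume 0 m :=
    intervalIntegral.intervalIntegrable_rpow' (by norm_num)
  have h2 := (h1.comp_sub_left m).symm
  simp only [sub_zero, sub_self] at h2
  rw [intervalIntegrable_iff_integrableOn_Ioc_of_le hm.le] at h2
  exact h2.mono_set Ioo_subset_Ioc_self

/-- If F is continuous on [0,m] with F(0)=0, F<0 on (0,m), F(m)=0, F differentiable at
0 and m with F'(0)<0 and F'(m)≠0, then T = √2·∫₀^m √(u/(-F u)) du is finite and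
positive. -/
theorem stmt17 (F : ℝ → ℝ) (m : ℝ) (hm : 0 < m)
    (hcont : ContinuousOn F (Icc 0 m)) (h0 : F 0 = 0) (hFm : F m = 0)
    (hneg : ∀ u ∈ Ioo 0 m, F u < 0)
    (hd0 : DifferentiableAt ℝ F 0) (hdm : DifferentiableAt ℝ F m)
    (h1 : deriv F 0 < 0) (h2 : deriv F m ≠ 0) :
    IntegrableOn (fun u => Real.sqrt (u / (-F u))) (Ioo 0 m) ∧
      0 < Real.sqrt 2 * ∫ u in Ioo 0 m, Real.sqrt (u / (-F u)) := by
  obtain ⟨c, hc, hbound⟩ := exists_lower_bound_aux F m hm hcont h0 hFm hneg hd0 hdm h1 h2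
  -- measurability
  have hmeas : AEStronglyMeasurable (fun u => Real.sqrt (u / (-F u)))
      (volume.restrict (Ioo 0 m)) := by
    apply ContinuousOn.aestronglyMeasurable _ measurableSet_Ioo
    apply Real.continuous_sqrt.comp_continuousOn
    apply ContinuousOn.div continuousOn_id
    · exact (hcont.mono Ioo_subset_Icc_self).neg
    · intro u hu; have := hneg u hu; intro hzero; rw [neg_eq_zero] at hzero; linarith
  -- pointwise bound
  have hptbd : ∀ u ∈ Ioo (0:ℝ) m,
      Real.sqrt (u / (-F u)) ≤ Real.sqrt (1 / c) * (m - u) ^ (-(1/2) : ℝ) := by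
    intro u hu
    obtain ⟨hu0, hum⟩ := hu
    have hmu : 0 < m - u := by linarith
    have hFpos : 0 < -F u := by have := hneg u ⟨hu0, hum⟩; linarith
    have hlow : c * (u * (m - u)) ≤ -F u := hbound u ⟨hu0, hum⟩
    have hdivle : u / (-F u) ≤ 1 / (c * (m - u)) := by
      rw [div_le_div_iff₀ hFpos (by positivity)]
      calc u * (c * (m - u)) = c * (u * (m - u)) := by ring
        _ ≤ -F u := hlow
        _ = 1 * (-F u) := by ring
    have hsplit : (1 : ℝ) / (c * (m - u)) = (1 / c) * (1 / (m - u)) := by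
      rw [one_div, mul_inv, one_div, one_div]
    have hrpow : Real.sqrt (1 / (m - u)) = (m - u) ^ (-(1/2) : ℝ) := by
      rw [one_div, Real.sqrt_inv, Real.sqrt_eq_rpow, ← Real.rpow_neg hmu.le]
    calc Real.sqrt (u / (-F u)) ≤ Real.sqrt (1 / (c * (m - u))) := Real.sqrt_le_sqrt hdivle
      _ = Real.sqrt ((1 / c) * (1 / (m - u))) := by rw [hsplit]
      _ = Real.sqrt (1 / c) * Real.sqrt (1 / (m - u)) := Real.sqrt_mul (by positivity) _
      _ = Real.sqrt (1 / c) * (m - u) ^ (-(1/2) : ℝ) := by rw [hrpow]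
  -- integrability
  have hgint : IntegrableOn (fun u : ℝ => Real.sqrt (1 / c) * (m - u) ^ (-(1/2) : ℝ))
      (Ioo 0 m) := (int_rpow_aux m hm).const_mul _
  have hint : IntegrableOn (fun u => Real.sqrt (u / (-F u))) (Ioo 0 m) := by
    apply Integrable.mono' hgint hmeas
    rw [ae_restrict_iff' measurableSet_Ioo]
    filter_upwards with u hu
    rw [Real.norm_eq_abs, abs_of_nonneg (Real.sqrt_nonneg _)]
    exact hptbd u hu
  refine ⟨hint, ?_⟩
  -- positivity
  have hpos : ∀ u ∈ Ioo (0:ℝ) m, 0 < Real.sqrt (u / (-F u)) := by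
    intro u hu
    have hFpos : 0 < -F u := by have := hneg u hu; linarith
    exact Real.sqrt_pos.mpr (div_pos hu.1 hFpos)
  have hvol : (0:ENNReal) < volume (Ioo (0:ℝ) m) := by
    rw [Real.volume_Ioo]
    exact ENNReal.ofReal_pos.mpr (by linarith)
  have hintpos : 0 < ∫ u in Ioo 0 m, Real.sqrt (u / (-F u)) := by
    rw [setIntegral_pos_iff_support_of_nonneg_ae
      (Filter.Eventually.of_forall fun u => Real.sqrt_nonneg _) hint]
    exact lt_of_lt_of_le hvol (measure_mono fun u hu =>
      ⟨Function.mem_support.mpr (ne_of_gt (hpos u hu)), hu⟩)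
  exact mul_pos (Real.sqrt_pos.mpr (by norm_num)) hintpos
end
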